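/- Let K > 0 and p : X → Y a surjective unital *-homomorphism of unital C*-algebras. Then br_K(Y) ≤ br_K(X): if every (n+1)-tuple of self-adjoint elements of X admits coordinate-wise norm-ε approximation by K-unessential (n+1)-tuples, the same holds in Y. -/

import Mathlib

/-- A tuple `(y_1,…,y_m)` of self-adjoint elements is `K`-unessential if for every rational
`δ > 0` there is a self-adjoint tuple `(z_1,…,z_m)` with `‖y_k - z_k‖ ≤ δ`, `∑ z_k²`
invertible, and `‖(∑ z_k²)⁻¹‖ ≤ 1/(K·δ²)`. -/
def KUnessential {X : Type*} [CStarAlgebra X] (K : ℝ) {m : ℕ} (y : Fin m → X) : Prop :=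
  ∀ δ : ℚ, 0 < δ → ∃ z : Fin m → X,
    (∀ k, IsSelfAdjoint (z k)) ∧ (∀ k, ‖y k - z k‖ ≤ (δ : ℝ)) ∧
    ∃ b : X, (∑ k, (z k) ^ 2) * b = 1 ∧ b * (∑ k, (z k) ^ 2) = 1 ∧
      ‖b‖ ≤ 1 / (K * (δ : ℝ) ^ 2)

/-- If `p : X → Y` is a surjective unital *-homomorphism, then `br_K(Y) ≤ br_K(X)`. -/
theorem stmt_11 {X Y : Type*} [CStarAlgebra X] [CStarAlgebra Y]
    (p : X →⋆ₐ[ℂ] Y) (hp : Function.Surjective p) (K : ℝ) (hK : 0 < K) (n : ℕ)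
    (hX : ∀ x : Fin (n + 1) → X, (∀ k, IsSelfAdjoint (x k)) → ∀ ε : ℝ, 0 < ε →
      ∃ y : Fin (n + 1) → X, (∀ k, IsSelfAdjoint (y k)) ∧ KUnessential K y ∧
        ∀ k, ‖x k - y k‖ < ε) :
    ∀ x : Fin (n + 1) → Y, (∀ k, IsSelfAdjoint (x k)) → ∀ ε : ℝ, 0 < ε →
      ∃ y : Fin (n + 1) → Y, (∀ k, IsSelfAdjoint (y k)) ∧ KUnessential K y ∧
        ∀ k, ‖x k - y k‖ < ε := by
  intro x hx ε hε
  -- lift each x k to a self-adjoint element of X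
  have hlift : ∀ k, ∃ a : X, IsSelfAdjoint a ∧ p a = x k := by
    intro k
    obtain ⟨a, ha⟩ := hp (x k)
    refine ⟨(2 : ℂ)⁻¹ • (a + star a), ?_, ?_⟩
    · rw [IsSelfAdjoint, star_smul, star_add, star_star, add_comm]
      simp [star_inv₀]
    · rw [map_smul, map_add, map_star, ha, (hx k).star_eq]
      rw [smul_add]
      rw [← add_smul]
      norm_num
  choose a ha hpa using hlift
  obtain ⟨y, hy, hyu, hyx⟩ := hX a ha ε hε
  refine ⟨fun k => p (y k), fun k => IsSelfAdjoint.map (hy k) p, ?_, ?_⟩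
  · intro δ hδ
    obtain ⟨z, hz, hzy, b, hb1, hb2, hbn⟩ := hyu δ hδ
    refine ⟨fun k => p (z k), fun k => IsSelfAdjoint.map (hz k) p, fun k => ?_,
      p b, ?_, ?_, ?_⟩
    · calc ‖p (y k) - p (z k)‖ = ‖p (y k - z k)‖ := by rw [map_sub]
        _ ≤ ‖y k - z k‖ := NonUnitalStarAlgHom.norm_apply_le p _
        _ ≤ (δ : ℝ) := hzy k
    · rw [show (∑ k, (p (z k)) ^ 2) = p (∑ k, (z k) ^ 2) by simp [map_sum], ← map_mul, hb1, map_one]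
    · rw [show (∑ k, (p (z k)) ^ 2) = p (∑ k, (z k) ^ 2) by simp [map_sum], ← map_mul, hb2, map_one]
    · exact (NonUnitalStarAlgHom.norm_apply_le p b).trans hbn
  · intro k
    calc ‖x k - p (y k)‖ = ‖p (a k - y k)‖ := by rw [map_sub, hpa]
      _ ≤ ‖a k - y k‖ := NonUnitalStarAlgHom.norm_apply_le p _
      _ < ε := hyx k
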